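/- Let 0 < α < 1. There exists a constant C > 0, depending only on α, with the following property. Let v : ℝ → ℝ be four times continuously differentiable and suppose the fourth derivative v⁽⁴⁾ is α-Hölder continuous with constant M, i.e., |v⁽⁴⁾(s) − v⁽⁴⁾(t)| ≤ M |s − t|^α for all s, t ∈ ℝ. For h > 0 define the error function E_h(z) = v''(z) − (v(z+h) − 2v(z) + v(z−h))/h². Then for every h > 0 and all x, y ∈ ℝ with |x − y| ≥ h, |E_h(x) − E_h(y)| ≤ C h² M |x − y|^α. -/

import Mathlib

/-- The error of the central second difference quotient with step `h` for `v` at `z`. -/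
noncomputable def sdErr (h : ℝ) (v : ℝ → ℝ) (z : ℝ) : ℝ :=
  deriv (deriv v) z - (v (z + h) - 2 * v z + v (z - h)) / h ^ 2

lemma iterW {v : ℝ → ℝ} (hv : ContDiff ℝ 4 v) {n : ℕ} (hn : (n : WithTop ℕ∞) ≤ 4) {a b x : ℝ}
    (hab : a < b) (hx : x ∈ Set.Icc a b) :
    iteratedDerivWithin n v (Set.Icc a b) x = iteratedDeriv n v x := by
  have h1 := ((contDiff_iff_ftaylorSeries.mp hv).hasFTaylorSeriesUpToOn
    (Set.Icc a b)).eq_iteratedFDerivWithin_of_uniqueDiffOn hn (uniqueDiffOn_Icc hab) hx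
  rw [iteratedDerivWithin_eq_iteratedFDerivWithin, iteratedDeriv_eq_iteratedFDeriv, ← h1]
  rfl

lemma taylor4_plus {v : ℝ → ℝ} (hv : ContDiff ℝ 4 v) {h : ℝ} (hh : 0 < h) (z : ℝ) :
    ∃ c ∈ Set.Ioo z (z + h), v (z + h) = v z + h * iteratedDeriv 1 v z
      + h ^ 2 / 2 * iteratedDeriv 2 v z + h ^ 3 / 6 * iteratedDeriv 3 v z
      + iteratedDeriv 4 v c * h ^ 4 / 24 := by
  have hzz : z < z + h := by linarith
  have hf : ContDiffOn ℝ 3 v (Set.Icc z (z + h)) := (hv.of_le (by norm_num)).contDiffOn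
  have hf' : DifferentiableOn ℝ (iteratedDerivWithin 3 v (Set.Icc z (z + h)))
      (Set.Ioo z (z + h)) := by
    apply DifferentiableOn.congr
      ((hv.differentiable_iteratedDeriv 3 (by norm_num)).differentiableOn)
    intro y hy
    exact iterW hv (by norm_num) hzz (Set.mem_Icc_of_Ioo hy)
  obtain ⟨c, hc, hrem⟩ := taylor_mean_remainder_lagrange hzz.ne
    (by rwa [Set.uIcc_of_le hzz.le]) (by rwa [Set.uIcc_of_le hzz.le, Set.uIoo_of_lt hzz])
  rw [Set.uIcc_of_le hzz.le] at hrem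
  rw [Set.uIoo_of_lt hzz] at hc
  refine ⟨c, hc, ?_⟩
  rw [taylor_within_apply] at hrem
  have e4 : iteratedDerivWithin 4 v (Set.Icc z (z + h)) c = iteratedDeriv 4 v c :=
    iterW hv (by norm_num) hzz (Set.mem_Icc_of_Ioo hc)
  have hz : z ∈ Set.Icc z (z + h) := Set.left_mem_Icc.2 hzz.le
  have e0 : iteratedDerivWithin 0 v (Set.Icc z (z + h)) z = v z := by
    simpa using iterW hv (by norm_num) hzz hz
  have e1 := iterW hv (n := 1) (by norm_num) hzz hz
  have e2 := iterW hv (n := 2) (by norm_num) hzz hz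
  have e3 := iterW hv (n := 3) (by norm_num) hzz hz
  simp only [Finset.sum_range_succ, Finset.sum_range_zero, e4, e0, e1, e2, e3,
    smul_eq_mul] at hrem
  norm_num [Nat.factorial] at hrem
  rw [iteratedDeriv_one]
  ring_nf at hrem ⊢
  linarith [hrem]

lemma taylor4_minus {v : ℝ → ℝ} (hv : ContDiff ℝ 4 v) {h : ℝ} (hh : 0 < h) (z : ℝ) :
    ∃ c ∈ Set.Ioo (z - h) z, v (z - h) = v z - h * iteratedDeriv 1 v z
      + h ^ 2 / 2 * iteratedDeriv 2 v z - h ^ 3 / 6 * iteratedDeriv 3 v z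
      + iteratedDeriv 4 v c * h ^ 4 / 24 := by
  have hw : ContDiff ℝ 4 (fun u => v (-u)) := hv.comp contDiff_neg
  obtain ⟨c, hc, hrem⟩ := taylor4_plus hw hh (-z)
  rw [Set.mem_Ioo] at hc
  refine ⟨-c, Set.mem_Ioo.mpr ⟨by linarith [hc.2], by linarith [hc.1]⟩, ?_⟩
  simp only [iteratedDeriv_comp_neg, neg_neg, smul_eq_mul] at hrem
  have hrw : -(-z + h) = z - h := by ring
  rw [hrw] at hrem
  rw [hrem]
  norm_num
  ring

lemma sdErr_repr {v : ℝ → ℝ} (hv : ContDiff ℝ 4 v) {h : ℝ} (hh : 0 < h) (z : ℝ) :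
    ∃ a ∈ Set.Ioo z (z + h), ∃ b ∈ Set.Ioo (z - h) z,
      sdErr h v z = -(iteratedDeriv 4 v a + iteratedDeriv 4 v b) * h ^ 2 / 24 := by
  obtain ⟨a, ha, ea⟩ := taylor4_plus hv hh z
  obtain ⟨b, hb, eb⟩ := taylor4_minus hv hh z
  refine ⟨a, ha, b, hb, ?_⟩
  have h2 : deriv (deriv v) z = iteratedDeriv 2 v z := by
    rw [iteratedDeriv_succ, iteratedDeriv_one]
  rw [sdErr, h2, ea, eb]
  field_simp
  ring


/-- For `0 < α < 1` there is a constant `C > 0`, depending only on `α`, such that for every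
`C⁴` function `v : ℝ → ℝ` whose fourth derivative is `α`-Hölder with constant `M`, the error
`E_h` of the central second difference quotient satisfies
`|E_h(x) - E_h(y)| ≤ C h² M |x - y|^α` whenever `h > 0` and `|x - y| ≥ h`. -/
theorem stmt14 (α : ℝ) (hα0 : 0 < α) (hα1 : α < 1) :
    ∃ C > 0, ∀ (v : ℝ → ℝ) (M : ℝ), ContDiff ℝ 4 v →
      (∀ s t : ℝ, |iteratedDeriv 4 v s - iteratedDeriv 4 v t| ≤ M * |s - t| ^ α) →
      ∀ h : ℝ, 0 < h → ∀ x y : ℝ, h ≤ |x - y| →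
        |sdErr h v x - sdErr h v y| ≤ C * h ^ 2 * M * |x - y| ^ α := by
  refine ⟨1, one_pos, fun v M hv hM h hh x y hxy => ?_⟩
  set f4 := iteratedDeriv 4 v
  have hM0 : 0 ≤ M := by
    have := hM 0 1
    simp [Real.one_rpow] at this
    exact le_trans (abs_nonneg _) this
  obtain ⟨a1, ha1, b1, hb1, e1⟩ := sdErr_repr hv hh x
  obtain ⟨a2, ha2, b2, hb2, e2⟩ := sdErr_repr hv hh y
  rw [e1, e2]
  have hd0 : 0 < |x - y| := lt_of_lt_of_le hh hxy
  -- bound on Hölder differences at nearby points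
  have key : ∀ p q : ℝ, |p - x| ≤ h → |q - y| ≤ h →
      |f4 p - f4 q| ≤ 3 * M * |x - y| ^ α := by
    intro p q hp hq
    have h1 : |p - q| ≤ 3 * |x - y| := by
      have : |p - q| ≤ |p - x| + |x - y| + |y - q| := by
        calc |p - q| = |(p - x) + (x - y) + (y - q)| := by ring_nf
          _ ≤ |(p - x) + (x - y)| + |y - q| := abs_add_le _ _
          _ ≤ |p - x| + |x - y| + |y - q| := by gcongr; exact abs_add_le _ _
      have hq' : |y - q| ≤ h := by rwa [abs_sub_comm]
      linarith
    calc |f4 p - f4 q| ≤ M * |p - q| ^ α := hM p q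
      _ ≤ M * (3 * |x - y|) ^ α :=
          mul_le_mul_of_nonneg_left (Real.rpow_le_rpow (abs_nonneg _) h1 hα0.le) hM0
      _ = M * ((3 : ℝ) ^ α * |x - y| ^ α) := by
          rw [Real.mul_rpow (by norm_num) (abs_nonneg _)]
      _ ≤ M * (3 * |x - y| ^ α) := by
          gcongr
          calc (3 : ℝ) ^ α ≤ (3 : ℝ) ^ (1 : ℝ) :=
                Real.rpow_le_rpow_of_exponent_le (by norm_num) hα1.le
            _ = 3 := Real.rpow_one 3
      _ = 3 * M * |x - y| ^ α := by ring
  have ka : |f4 a1 - f4 a2| ≤ 3 * M * |x - y| ^ α := by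
    refine key a1 a2 ?_ ?_
    · rw [Set.mem_Ioo] at ha1; rw [abs_le]; constructor <;> linarith [ha1.1, ha1.2]
    · rw [Set.mem_Ioo] at ha2; rw [abs_le]; constructor <;> linarith [ha2.1, ha2.2]
  have kb : |f4 b1 - f4 b2| ≤ 3 * M * |x - y| ^ α := by
    refine key b1 b2 ?_ ?_
    · rw [Set.mem_Ioo] at hb1; rw [abs_le]; constructor <;> linarith [hb1.1, hb1.2]
    · rw [Set.mem_Ioo] at hb2; rw [abs_le]; constructor <;> linarith [hb2.1, hb2.2]
  have expand : -(f4 a1 + f4 b1) * h ^ 2 / 24 - -(f4 a2 + f4 b2) * h ^ 2 / 24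
      = ((f4 a2 - f4 a1) + (f4 b2 - f4 b1)) * h ^ 2 / 24 := by ring
  rw [expand]
  rw [abs_div, abs_mul, abs_pow]
  have h24 : |(24 : ℝ)| = 24 := by norm_num
  rw [h24, sq_abs]
  have habs : |(f4 a2 - f4 a1) + (f4 b2 - f4 b1)| ≤ 6 * M * |x - y| ^ α := by
    calc |(f4 a2 - f4 a1) + (f4 b2 - f4 b1)| ≤ |f4 a2 - f4 a1| + |f4 b2 - f4 b1| := abs_add_le _ _
      _ ≤ 3 * M * |x - y| ^ α + 3 * M * |x - y| ^ α := by
          rw [abs_sub_comm (f4 a2), abs_sub_comm (f4 b2)]; exact add_le_add ka kb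
      _ = 6 * M * |x - y| ^ α := by ring
  have hh2 : (0 : ℝ) ≤ h ^ 2 := sq_nonneg h
  calc |(f4 a2 - f4 a1) + (f4 b2 - f4 b1)| * h ^ 2 / 24
      ≤ 6 * M * |x - y| ^ α * h ^ 2 / 24 := by gcongr
    _ ≤ 1 * h ^ 2 * M * |x - y| ^ α := by
        have : (0 : ℝ) ≤ M * |x - y| ^ α := mul_nonneg hM0 (Real.rpow_nonneg (abs_nonneg _) α)
        nlinarith [sq_nonneg h]
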